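/- Let A be a compact Hausdorff second-countable abelian group with normalized Haar probability measure μ, and let ℬ be a sub-σ-algebra of the Borel σ-algebra of A that is shift invariant, i.e. S ∈ ℬ implies S + t ∈ ℬ for every t ∈ A. Let φ : A → ℂ be Borel measurable with |φ(x)| = 1 for all x, and suppose that for every t ∈ A the function x ↦ φ(x)·conj(φ(x+t)) is almost everywhere equal to a ℬ-measurable function. Then either the conditional expectation μ[φ | ℬ] is 0 almost everywhere, or φ is almost everywhere equal to a ℬ-measurable function. -/

import Mathlib

open MeasureTheory
open scoped ComplexConjugate

section Aux

variable {α : Type*} {m m0 : MeasurableSpace α} {μ : Measure α}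

/-- Conditional expectation commutes with continuous linear maps. -/
lemma condexp_clm_aux {E F : Type*} [NormedAddCommGroup E] [NormedSpace ℝ E] [CompleteSpace E]
    [NormedAddCommGroup F] [NormedSpace ℝ F] [CompleteSpace F]
    (hm : m ≤ m0) [SigmaFinite (μ.trim hm)] (T : E →L[ℝ] F) {f : α → E}
    (hf : Integrable f μ) :
    (fun x => T ((μ[f|m]) x)) =ᵐ[μ] μ[fun x => T (f x)|m] := by
  refine ae_eq_condExp_of_forall_setIntegral_eq hm (T.integrable_comp hf) ?_ ?_ ?_
  · intro s _ _
    exact (T.integrable_comp integrable_condExp).integrableOn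
  · intro s hs hμs
    rw [T.integral_comp_comm integrable_condExp.integrableOn,
      setIntegral_condExp hm hf hs, ← T.integral_comp_comm hf.integrableOn]
  · exact (T.continuous.comp_stronglyMeasurable stronglyMeasurable_condExp).aestronglyMeasurable

/-- The complex conditional expectation can be reconstructed from real/imaginary parts. -/
lemma condexp_re_im_aux (hm : m ≤ m0) [SigmaFinite (μ.trim hm)] {f : α → ℂ}
    (hf : Integrable f μ) :
    μ[f|m] =ᵐ[μ] fun x =>
      ((μ[fun y => (f y).re|m]) x : ℂ) + ((μ[fun y => (f y).im|m]) x : ℂ) * Complex.I := by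
  have h1 := condexp_clm_aux hm Complex.reCLM hf
  have h2 := condexp_clm_aux hm Complex.imCLM hf
  filter_upwards [h1, h2] with x hx1 hx2
  simp only [Complex.reCLM_apply, Complex.imCLM_apply] at hx1 hx2
  rw [← hx1, ← hx2, Complex.re_add_im]

/-- Pulling a bounded `m`-measurable complex function out of a conditional expectation. -/
lemma condexp_bdd_mul_aux (hm : m ≤ m0) [IsFiniteMeasure μ] {g h : α → ℂ}
    (hg : StronglyMeasurable[m] g) (hgb : ∀ x, ‖g x‖ ≤ 1) (hh : Integrable h μ) :
    μ[fun x => g x * h x|m] =ᵐ[μ] fun x => g x * (μ[h|m]) x := by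
  haveI : SigmaFinite (μ.trim hm) := by
    have := isFiniteMeasure_trim hm (μ := μ)
    infer_instance
  -- real and imaginary parts of g
  set gr : α → ℝ := fun x => (g x).re with hgr_def
  set gi : α → ℝ := fun x => (g x).im with hgi_def
  have hgr : StronglyMeasurable[m] gr :=
    Complex.continuous_re.comp_stronglyMeasurable hg
  have hgi : StronglyMeasurable[m] gi :=
    Complex.continuous_im.comp_stronglyMeasurable hg
  have hgrb : ∀ x, |gr x| ≤ 1 := fun x => le_trans (Complex.abs_re_le_norm (g x)) (hgb x)
  have hgib : ∀ x, |gi x| ≤ 1 := fun x => le_trans (Complex.abs_im_le_norm (g x)) (hgb x)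
  set hr : α → ℝ := fun x => (h x).re with hhr_def
  set hi : α → ℝ := fun x => (h x).im with hhi_def
  have hhr : Integrable hr μ := Complex.reCLM.integrable_comp hh
  have hhi : Integrable hi μ := Complex.imCLM.integrable_comp hh
  -- integrability of products
  have hprod : ∀ (a : α → ℝ), (∀ x, |a x| ≤ 1) → StronglyMeasurable[m] a →
      ∀ (b : α → ℝ), Integrable b μ → Integrable (a * b) μ := by
    intro a ha ham b hb
    refine Integrable.mono' hb.norm ((ham.mono hm).aestronglyMeasurable.mul
      hb.aestronglyMeasurable) ?_
    filter_upwards with x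
    simp only [Pi.mul_apply, norm_mul, Real.norm_eq_abs]
    calc |a x| * |b x| ≤ 1 * |b x| := by
          exact mul_le_mul_of_nonneg_right (ha x) (abs_nonneg _)
      _ = ‖b x‖ := by simp [Real.norm_eq_abs]
  have h11 : Integrable (gr * hr) μ := hprod gr hgrb hgr hr hhr
  have h12 : Integrable (gi * hi) μ := hprod gi hgib hgi hi hhi
  have h21 : Integrable (gr * hi) μ := hprod gr hgrb hgr hi hhi
  have h22 : Integrable (gi * hr) μ := hprod gi hgib hgi hr hhr
  -- products pulled out in the real world
  have m11 : μ[gr * hr|m] =ᵐ[μ] gr * μ[hr|m] := condExp_mul_of_stronglyMeasurable_left hgr h11 hhr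
  have m12 : μ[gi * hi|m] =ᵐ[μ] gi * μ[hi|m] := condExp_mul_of_stronglyMeasurable_left hgi h12 hhi
  have m21 : μ[gr * hi|m] =ᵐ[μ] gr * μ[hi|m] := condExp_mul_of_stronglyMeasurable_left hgr h21 hhi
  have m22 : μ[gi * hr|m] =ᵐ[μ] gi * μ[hr|m] := condExp_mul_of_stronglyMeasurable_left hgi h22 hhr
  have hgh : Integrable (fun x => g x * h x) μ := by
    refine Integrable.mono' hh.norm ((hg.mono hm).aestronglyMeasurable.mul
      hh.aestronglyMeasurable) ?_
    filter_upwards with x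
    rw [norm_mul]
    calc ‖g x‖ * ‖h x‖ ≤ 1 * ‖h x‖ := mul_le_mul_of_nonneg_right (hgb x) (norm_nonneg _)
      _ = ‖h x‖ := one_mul _
  -- compute the real part of g*h
  have hre : (fun x => ((g x) * (h x)).re) = gr * hr - gi * hi := by
    funext x; simp [hgr_def, hgi_def, hhr_def, hhi_def, Complex.mul_re]
  have him : (fun x => ((g x) * (h x)).im) = gr * hi + gi * hr := by
    funext x; simp [hgr_def, hgi_def, hhr_def, hhi_def, Complex.mul_im]
  have hre' : μ[fun x => ((g x) * (h x)).re|m] =ᵐ[μ] gr * μ[hr|m] - gi * μ[hi|m] := by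
    rw [hre]
    refine (condExp_sub h11 h12 m).trans ?_
    exact Filter.EventuallyEq.sub m11 m12
  have him' : μ[fun x => ((g x) * (h x)).im|m] =ᵐ[μ] gr * μ[hi|m] + gi * μ[hr|m] := by
    rw [him]
    refine (condExp_add h21 h22 m).trans ?_
    exact Filter.EventuallyEq.add m21 m22
  have hrec := condexp_re_im_aux hm hgh
  have hrec2 := condexp_re_im_aux hm hh
  filter_upwards [hrec, hrec2, hre', him'] with x hx1 hx2 hx3 hx4
  rw [hx1, hx3, hx4, hx2]
  set a := gr x; set b := gi x
  set c := (μ[hr|m]) x; set d := (μ[hi|m]) x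
  have hgx : g x = (a : ℂ) + (b : ℂ) * Complex.I := (Complex.re_add_im (g x)).symm
  rw [hgx]
  simp only [Pi.sub_apply, Pi.add_apply, Pi.mul_apply]
  apply Complex.ext <;> simp <;> try ring

end Aux

section Group

variable {A : Type*} [AddCommGroup A] [TopologicalSpace A] [IsTopologicalAddGroup A]
    [CompactSpace A] [T2Space A] [SecondCountableTopology A]
    [mA : MeasurableSpace A] [BorelSpace A]

/-- A measurable function a.e. invariant under all translations is a.e. constant. -/
lemma ae_const_of_all_shifts (μ : Measure A) [μ.IsAddHaarMeasure] [IsProbabilityMeasure μ]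
    {h : A → ℂ} (hm : Measurable h)
    (hinv : ∀ t : A, (fun x => h (x + t)) =ᵐ[μ] h) :
    ∃ c : ℂ, h =ᵐ[μ] fun _ => c := by
  set M : Set (A × A) := {p : A × A | h (p.2 + p.1) ≠ h p.2} with hM_def
  have hMmeas : MeasurableSet M := by
    have h1 : Measurable fun p : A × A => h (p.2 + p.1) :=
      hm.comp (measurable_snd.add measurable_fst)
    have h2 : Measurable fun p : A × A => h p.2 := hm.comp measurable_snd
    exact (measurableSet_eq_fun h1 h2).compl
  have hM0 : (μ.prod μ) M = 0 := by
    rw [Measure.measure_prod_null hMmeas]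
    filter_upwards with t
    have h0 : μ {x : A | ¬ h (x + t) = h x} = 0 := ae_iff.mp (hinv t)
    simpa [hM_def, Set.preimage] using h0
  have hswap : MeasurableSet (Prod.swap ⁻¹' M) := hMmeas.preimage measurable_swap
  have hM0' : (μ.prod μ) (Prod.swap ⁻¹' M) = 0 := by
    have : (μ.prod μ) (Prod.swap ⁻¹' M) = ((μ.prod μ).map Prod.swap) M := by
      rw [Measure.map_apply measurable_swap hMmeas]
    rw [this, Measure.prod_swap, hM0]
  rw [Measure.measure_prod_null hswap] at hM0'
  haveI : Filter.NeBot (ae μ) := ae_neBot.mpr (IsProbabilityMeasure.ne_zero μ)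
  obtain ⟨x₀, hx₀⟩ := hM0'.exists
  simp only [Pi.zero_apply] at hx₀
  have hx₀' : μ {t : A | h (x₀ + t) ≠ h x₀} = 0 := by
    have hpre : Prod.mk x₀ ⁻¹' (Prod.swap ⁻¹' M) = {t : A | h (x₀ + t) ≠ h x₀} := by
      ext t; simp [hM_def, Set.preimage, Prod.swap]
    rwa [hpre] at hx₀
  refine ⟨h x₀, ?_⟩
  have hmp : MeasurePreserving (fun t => x₀ + t) μ μ := measurePreserving_add_left μ x₀
  have hset : MeasurableSet {y : A | h y ≠ h x₀} :=
    (measurableSet_eq_fun hm measurable_const).compl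
  have : μ {y : A | h y ≠ h x₀} = 0 := by
    rw [← hmp.measure_preimage hset.nullMeasurableSet]
    exact hx₀'
  exact this

/-- Translates of integrable functions are integrable. -/
lemma integrable_shift_aux (μ : Measure A) [μ.IsAddHaarMeasure] [IsProbabilityMeasure μ]
    {φ : A → ℂ} (h : Integrable φ μ) (t : A) : Integrable (fun x => φ (x + t)) μ := by
  have hmp : MeasurePreserving (fun x : A => x + t) μ μ := measurePreserving_add_right μ t
  exact (hmp.integrable_comp_emb (MeasurableEquiv.addRight t).measurableEmbedding).mpr h

end Group

/-- Conditional expectation commutes with translation when the sub-σ-algebra is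
shift invariant. -/
lemma condexp_comp_add_aux {A : Type*} [AddCommGroup A] (ℬ : MeasurableSpace A)
    [TopologicalSpace A] [IsTopologicalAddGroup A]
    [CompactSpace A] [T2Space A] [SecondCountableTopology A]
    [mA : MeasurableSpace A] [BorelSpace A]
    (μ : Measure A) [μ.IsAddHaarMeasure] [IsProbabilityMeasure μ]
    (hle : ℬ ≤ mA)
    (hinv : ∀ S : Set A, MeasurableSet[ℬ] S → ∀ t : A,
      MeasurableSet[ℬ] ((fun x => x + t) '' S))
    {φ : A → ℂ} (hint : Integrable φ μ) (t : A) :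
    (fun x => (μ[φ|ℬ]) (x + t)) =ᵐ[μ] μ[fun x => φ (x + t)|ℬ] := by
  haveI : SigmaFinite (μ.trim hle) := by
    have := isFiniteMeasure_trim hle (μ := μ)
    infer_instance
  have hmp : MeasurePreserving (fun x : A => x + t) μ μ := measurePreserving_add_right μ t
  have hemb : MeasurableEmbedding (fun x : A => x + t) :=
    (MeasurableEquiv.addRight t).measurableEmbedding
  have hTb : @Measurable A A ℬ ℬ (fun x => x + t) := by
    intro S hS
    have : (fun x : A => x + t) ⁻¹' S = (fun x : A => x + (-t)) '' S := by
      ext x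
      simp only [Set.mem_preimage, Set.mem_image]
      constructor
      · intro hx; exact ⟨x + t, hx, by abel⟩
      · rintro ⟨s, hs, rfl⟩; simpa [add_assoc] using hs
    rw [this]
    exact hinv S hS (-t)
  refine ae_eq_condExp_of_forall_setIntegral_eq hle
    (hmp.integrable_comp_emb hemb |>.mpr hint) ?_ ?_ ?_
  · intro s _ _
    exact ((hmp.integrable_comp_emb hemb).mpr integrable_condExp).integrableOn
  · intro s hs _
    have hs' : MeasurableSet[ℬ] ((fun x : A => x + t) '' s) := hinv s hs t
    have hpre : (fun x : A => x + t) ⁻¹' ((fun x : A => x + t) '' s) = s :=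
      Set.preimage_image_eq s (fun a b hab => by simpa using hab)
    calc ∫ x in s, (μ[φ|ℬ]) (x + t) ∂μ
        = ∫ x in (fun x : A => x + t) ⁻¹' ((fun x : A => x + t) '' s),
            (μ[φ|ℬ]) (x + t) ∂μ := by rw [hpre]
      _ = ∫ y in (fun x : A => x + t) '' s, (μ[φ|ℬ]) y ∂μ :=
          hmp.setIntegral_preimage_emb hemb _ _
      _ = ∫ y in (fun x : A => x + t) '' s, φ y ∂μ := setIntegral_condExp hle hint hs'
      _ = ∫ x in (fun x : A => x + t) ⁻¹' ((fun x : A => x + t) '' s), φ (x + t) ∂μ :=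
          (hmp.setIntegral_preimage_emb hemb _ _).symm
      _ = ∫ x in s, φ (x + t) ∂μ := by rw [hpre]
  · exact (stronglyMeasurable_condExp.comp_measurable hTb).aestronglyMeasurable

/-- let `ℬ` be a shift invariant sub-σ-algebra of the Borel σ-algebra of a
compact abelian group `A` and let `φ : A → ℂ` with `|φ| = 1` be Borel measurable such that
every difference function `x ↦ φ(x)·conj(φ(x+t))` is a.e. equal to a `ℬ`-measurable
function. Then either `μ[φ|ℬ] = 0` a.e., or `φ` is a.e. equal to a `ℬ`-measurable
function. -/
theorem character_dichotomy_of_shift_invariant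
    {A : Type*} [AddCommGroup A] [TopologicalSpace A] [IsTopologicalAddGroup A]
    [CompactSpace A] [T2Space A] [SecondCountableTopology A]
    [mA : MeasurableSpace A] [BorelSpace A]
    (μ : Measure A) [μ.IsAddHaarMeasure] [IsProbabilityMeasure μ]
    (ℬ : MeasurableSpace A) (hle : ℬ ≤ mA)
    (hinv : ∀ S : Set A, MeasurableSet[ℬ] S → ∀ t : A,
      MeasurableSet[ℬ] ((fun x => x + t) '' S))
    (φ : A → ℂ) (hmeas : Measurable[mA] φ) (hnorm : ∀ x, ‖φ x‖ = 1)
    (hdiff : ∀ t : A, ∃ g : A → ℂ, Measurable[ℬ] g ∧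
      (fun x => φ x * conj (φ (x + t))) =ᵐ[μ] g) :
    (@condExp A ℂ ℬ mA _ _ μ φ =ᵐ[μ] 0) ∨
      ∃ g : A → ℂ, Measurable[ℬ] g ∧ φ =ᵐ[μ] g := by
  haveI : SigmaFinite (μ.trim hle) := by
    have := isFiniteMeasure_trim hle (μ := μ)
    infer_instance
  -- basic facts
  have hunit : ∀ z : ℂ, ‖z‖ = 1 → z * conj z = 1 := by
    intro z hz
    rw [Complex.mul_conj]
    norm_cast
    rw [Complex.normSq_eq_norm_sq, hz]; norm_num
  have hφint : Integrable φ μ := by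
    refine Integrable.mono' (integrable_const 1) hmeas.aestronglyMeasurable ?_
    filter_upwards with x; rw [hnorm x]
  -- upgrade hdiff to unimodular ℬ-measurable versions
  have hdiff' : ∀ t : A, ∃ g : A → ℂ, Measurable[ℬ] g ∧ (∀ x, ‖g x‖ = 1) ∧
      (fun x => φ x * conj (φ (x + t))) =ᵐ[μ] g := by
    intro t
    obtain ⟨g, hgm, hgae⟩ := hdiff t
    have hset : MeasurableSet[ℬ] {x | ‖g x‖ = 1} := by
      have : Measurable[ℬ] fun x => ‖g x‖ := hgm.norm
      exact this (measurableSet_singleton 1)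
    refine ⟨fun x => if ‖g x‖ = 1 then g x else 1, Measurable.ite hset hgm measurable_const,
      ?_, ?_⟩
    · intro x
      show ‖if ‖g x‖ = 1 then g x else 1‖ = 1
      by_cases hx : ‖g x‖ = 1
      · rw [if_pos hx]; exact hx
      · rw [if_neg hx]; simp
    · have hg1 : ∀ᵐ x ∂μ, ‖g x‖ = 1 := by
        filter_upwards [hgae] with x hx
        rw [← hx, norm_mul, hnorm, RCLike.norm_conj, hnorm, one_mul]
      filter_upwards [hgae, hg1] with x hx hx1
      rw [hx, if_pos hx1]
  set f := @condExp A ℂ ℬ mA _ _ μ φ with hf_def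
  have hf_meas : StronglyMeasurable[ℬ] f := stronglyMeasurable_condExp
  -- key step: f(x) = g_t(x) * f(x+t) a.e.
  have hkey : ∀ t : A, ∀ g : A → ℂ, Measurable[ℬ] g → (∀ x, ‖g x‖ = 1) →
      ((fun x => φ x * conj (φ (x + t))) =ᵐ[μ] g) →
      f =ᵐ[μ] fun x => g x * f (x + t) := by
    intro t g hgm hgu hgae
    have hφT : Integrable (fun x => φ (x + t)) μ := integrable_shift_aux (mA := mA) μ hφint t
    have h1 : φ =ᵐ[μ] fun x => g x * φ (x + t) := by
      filter_upwards [hgae] with x hx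
      rw [← hx, mul_assoc, mul_comm (conj (φ (x + t))) (φ (x + t)),
        hunit _ (hnorm (x + t)), mul_one]
    have h2 : f =ᵐ[μ] μ[fun x => g x * φ (x + t)|ℬ] := condExp_congr_ae h1
    have h3 : μ[fun x => g x * φ (x + t)|ℬ] =ᵐ[μ]
        fun x => g x * (μ[fun x => φ (x + t)|ℬ]) x :=
      condexp_bdd_mul_aux hle hgm.stronglyMeasurable (fun x => (hgu x).le) hφT
    have h4 : (fun x => f (x + t)) =ᵐ[μ] μ[fun x => φ (x + t)|ℬ] :=
      condexp_comp_add_aux (mA := mA) ℬ μ hle hinv hφint t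
    refine (h2.trans h3).trans ?_
    filter_upwards [h4.symm] with x hx
    rw [hx]
  -- | f | is a.e. shift invariant
  have hfm : Measurable[mA] f := (hf_meas.mono hle).measurable
  have hnf : ∀ t : A, (fun x => ((‖f (x + t)‖ : ℝ) : ℂ)) =ᵐ[μ] fun x => ((‖f x‖ : ℝ) : ℂ) := by
    intro t
    obtain ⟨g, hgm, hgu, hgae⟩ := hdiff' t
    filter_upwards [hkey t g hgm hgu hgae] with x hx
    rw [hx, norm_mul, hgu x, one_mul]
  have hfnorm : Measurable[mA] fun x => ((‖f x‖ : ℝ) : ℂ) :=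
    fun s hs => hfm (measurable_norm (Complex.measurable_ofReal hs))
  obtain ⟨c, hc⟩ := ae_const_of_all_shifts (mA := mA) μ hfnorm hnf
  -- c is a real value of ‖f‖
  have hcex : ∃ x, ((‖f x‖ : ℝ) : ℂ) = c := by
    have : Filter.NeBot (ae μ) := ae_neBot.mpr (IsProbabilityMeasure.ne_zero μ)
    exact hc.exists
  obtain ⟨x₁, hx₁⟩ := hcex
  by_cases hc0 : c = 0
  · left
    filter_upwards [hc] with x hx
    rw [hc0] at hx
    have : ‖f x‖ = 0 := by exact_mod_cast hx
    simpa using norm_eq_zero.mp this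
  · right
    -- the normalized conditional expectation ψ
    set ψ : A → ℂ := fun x => f x / c with hψ_def
    have hψm : Measurable[ℬ] ψ := hf_meas.measurable.div_const c
    have hψu : ∀ᵐ x ∂μ, ‖ψ x‖ = 1 := by
      filter_upwards [hc] with x hx
      have hcn : ‖c‖ = ‖f x‖ := by rw [← hx]; simp
      have hfx : ‖f x‖ ≠ 0 := by
        intro h0
        apply hc0
        rw [← hx, h0]; simp
      show ‖f x / c‖ = 1
      rw [norm_div, hcn]
      exact div_self hfx
    -- ψ satisfies the same shift relation
    have hψkey : ∀ t : A, ∀ g : A → ℂ, Measurable[ℬ] g → (∀ x, ‖g x‖ = 1) →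
        ((fun x => φ x * conj (φ (x + t))) =ᵐ[μ] g) →
        ψ =ᵐ[μ] fun x => g x * ψ (x + t) := by
      intro t g hgm hgu hgae
      filter_upwards [hkey t g hgm hgu hgae] with x hx
      show f x / c = g x * (f (x + t) / c)
      rw [hx, mul_div_assoc]
    -- u = φ * conj ψ is a.e. shift invariant
    set u : A → ℂ := fun x => φ x * conj (ψ x) with hu_def
    have hψmA : Measurable[mA] ψ := hψm.mono hle le_rfl
    have hum : Measurable[mA] u := by
      apply hmeas.mul
      exact continuous_star.measurable.comp hψmA
    have hu_shift : ∀ t : A, (fun x => u (x + t)) =ᵐ[μ] u := by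
      intro t
      obtain ⟨g, hgm, hgu, hgae⟩ := hdiff' t
      have hφrel : φ =ᵐ[μ] fun x => g x * φ (x + t) := by
        filter_upwards [hgae] with x hx
        rw [← hx, mul_assoc, mul_comm (conj (φ (x + t))) (φ (x + t)),
          hunit _ (hnorm (x + t)), mul_one]
      filter_upwards [hφrel, hψkey t g hgm hgu hgae] with x hφx hψx
      show φ (x + t) * conj (ψ (x + t)) = φ x * conj (ψ x)
      rw [hφx, hψx, map_mul]
      have hg1 : g x * conj (g x) = 1 := hunit _ (hgu x)
      calc φ (x + t) * conj (ψ (x + t))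
          = (g x * conj (g x)) * (φ (x + t) * conj (ψ (x + t))) := by rw [hg1, one_mul]
        _ = g x * φ (x + t) * (conj (g x) * conj (ψ (x + t))) := by ring
    obtain ⟨d, hd⟩ := ae_const_of_all_shifts (mA := mA) μ hum hu_shift
    refine ⟨fun x => d * ψ x, (hψm.const_mul d), ?_⟩
    filter_upwards [hd, hψu] with x hdx hψx
    have h1 : conj (ψ x) * ψ x = 1 := by
      rw [mul_comm]; exact hunit _ hψx
    calc φ x = φ x * (conj (ψ x) * ψ x) := by rw [h1, mul_one]
      _ = (φ x * conj (ψ x)) * ψ x := by ring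
      _ = u x * ψ x := rfl
      _ = d * ψ x := by rw [hdx]
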